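/- Let K be a field, n ≥ 2, R = K[x_1,…,x_n], and let M be an n×n matrix over R all of whose entries are homogeneous linear forms and which satisfies M ·ᵥ x = 0 as an identity in R^n, where x = (x_1,…,x_n) is the vector of variables. Then for every vector c = (c_1,…,c_n) ∈ K^n, writing ℓ = c_1 x_1 + … + c_n x_n, each entry of the row vector c · adj(M) (i.e., Σ_j c_j · adj(M)_{j,i} for each i) is divisible by ℓ in R. -/

import Mathlib

open MvPolynomial Matrix

set_option maxHeartbeats 1000000
set_option synthInstance.maxHeartbeats 200000

/-- If `N *ᵥ y = 0`, `y ≠ 0`, and `∑ b j * y j = 0`, then `∑ b j * adj(N) j i = 0`. -/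
lemma aux_zero {K : Type*} [Field K] {n : ℕ}
    (N : Matrix (Fin n) (Fin n) (MvPolynomial (Fin n) K))
    (y : Fin n → MvPolynomial (Fin n) K) (hy : y ≠ 0)
    (hN : N.mulVec y = 0)
    (b : Fin n → MvPolynomial (Fin n) K)
    (hb : ∑ j, b j * y j = 0) (i : Fin n) :
    ∑ j, b j * N.adjugate j i = 0 := by
  have h1 : ∀ j, b j * N.adjugate j i = Nᵀ.cramer (Pi.single j (b j)) i := by
    intro j
    rw [← smul_eq_mul, Matrix.adjugate, Matrix.of_apply, ← Pi.smul_apply,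
      ← LinearMap.map_smul, ← Pi.single_smul', smul_eq_mul, mul_one]
  simp_rw [h1]
  rw [Matrix.sum_cramer_apply]
  have h3 : (fun j => ∑ x, Pi.single x (b x) j) = b := by
    funext j
    simp [Pi.single_apply]
  rw [h3, Matrix.cramer_transpose_apply]
  have h4 : (N.updateRow i b).mulVec y = 0 := by
    funext j
    by_cases hj : j = i
    · subst hj
      simpa [Matrix.mulVec, dotProduct] using hb
    · have := congrFun hN j
      simpa [Matrix.mulVec, dotProduct, Matrix.updateRow_ne hj] using this
  exact Matrix.exists_mulVec_eq_zero_iff.mp ⟨y, hy, h4⟩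

theorem stmt4 (K : Type*) [Field K] (n : ℕ) (hn : 2 ≤ n)
    (M : Matrix (Fin n) (Fin n) (MvPolynomial (Fin n) K))
    (hlin : ∀ i j, (M i j).IsHomogeneous 1)
    (hMx : M.mulVec (fun i => X i) = 0)
    (c : Fin n → K) :
    ∀ i, (∑ j, C (c j) * X j) ∣ ∑ j, C (c j) * M.adjugate j i := by
  intro i
  by_cases hc : c = 0
  · subst hc; simp
  obtain ⟨k, hk⟩ : ∃ k, c k ≠ 0 := Function.ne_iff.mp hc
  set ℓ : MvPolynomial (Fin n) K := ∑ j, C (c j) * X j with hℓ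
  set g : Fin n → MvPolynomial (Fin n) K :=
    fun j => X j - (if j = k then C (c k)⁻¹ * ℓ else 0) with hg
  -- ∑ c_j g_j = 0
  have hsum0 : ∑ j, C (c j) * g j = 0 := by
    simp only [hg, mul_sub, mul_ite, mul_zero]
    rw [Finset.sum_sub_distrib, Finset.sum_ite_eq' Finset.univ k
      (fun j => C (c j) * (C (c k)⁻¹ * ℓ))]
    simp only [Finset.mem_univ, if_pos]
    rw [← mul_assoc, ← _root_.map_mul, mul_inv_cancel₀ hk, _root_.map_one, one_mul, ← hℓ, sub_self]
  -- aeval g is the identity modulo (ℓ)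
  have hmk : ∀ p : MvPolynomial (Fin n) K,
      Ideal.Quotient.mk (Ideal.span {ℓ}) (aeval g p) = Ideal.Quotient.mk (Ideal.span {ℓ}) p := by
    have hcomp : (Ideal.Quotient.mkₐ K (Ideal.span {ℓ})).comp (aeval g)
        = Ideal.Quotient.mkₐ K (Ideal.span {ℓ}) := by
      apply MvPolynomial.algHom_ext
      intro j
      simp only [AlgHom.comp_apply, aeval_X, Ideal.Quotient.mkₐ_eq_mk, hg]
      rw [map_sub]
      have hzero : Ideal.Quotient.mk (Ideal.span {ℓ})
          (if j = k then C (c k)⁻¹ * ℓ else 0) = 0 := by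
        split
        · rw [Ideal.Quotient.eq_zero_iff_mem]
          exact Ideal.mul_mem_left _ _ (Ideal.subset_span rfl)
        · exact map_zero _
      rw [hzero, sub_zero]
    intro p
    simpa using DFunLike.congr_fun hcomp p
  rw [← Ideal.mem_span_singleton, ← Ideal.Quotient.eq_zero_iff_mem, ← hmk]
  have hadj : M.adjugate.map (aeval g) = (M.map (aeval g)).adjugate := by
    simpa [AlgHom.mapMatrix_apply] using
      (aeval g : MvPolynomial (Fin n) K →ₐ[K] MvPolynomial (Fin n) K).map_adjugate M
  have hφsum : (aeval g) (∑ j, C (c j) * M.adjugate j i) = 0 := by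
    rw [map_sum]
    have hterm : ∀ j, (aeval g) (C (c j) * M.adjugate j i)
        = C (c j) * (M.map (aeval g)).adjugate j i := by
      intro j
      rw [_root_.map_mul]
      congr 1
      · rw [aeval_C, algebraMap_eq]
      · rw [← hadj]; rfl
    simp_rw [hterm]
    refine aux_zero (M.map (aeval g)) g ?_ ?_ (fun j => C (c j)) hsum0 i
    · intro h0
      obtain ⟨j, hjk⟩ : ∃ j : Fin n, j ≠ k := by
        have : 1 < Fintype.card (Fin n) := by rw [Fintype.card_fin]; omega
        exact Fintype.exists_ne_of_one_lt_card this k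
      have := congrFun h0 j
      simp only [hg, if_neg hjk, sub_zero, Pi.zero_apply] at this
      exact X_ne_zero j this
    · funext j
      have hMj : ∑ x, M j x * X x = 0 := by
        have := congrFun hMx j
        simpa [Matrix.mulVec, dotProduct] using this
      have : (M.map (aeval g)).mulVec g j = (aeval g) (∑ x, M j x * X x) := by
        rw [map_sum]
        simp [Matrix.mulVec, dotProduct, Matrix.map_apply]
      rw [Pi.zero_apply, this, hMj, map_zero]
  rw [hφsum, map_zero]
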